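/- arXiv:math-ph/0001011 — 2 statements merged into one kernel-verified Lean document; each statement's English description precedes it below -/
import Mathlib

section
/- Let T be a braided operator on H ⊗ H with the operators P_n defined as usual. Then (1 ⊗ P_n)(T_1 T_2 ⋯ T_n) = (T_1 T_2 ⋯ T_n)(P_n ⊗ 1) on H^{⊗(n+1)}. -/
open scoped ComplexOrder

namespace Wick

/-- The operator `T_i = 1^{⊗(i-1)} ⊗ T ⊗ 1^{⊗(n-i-1)}` on `H^{⊗n}` (1-indexed, acting on
tensor factors `i` and `i+1`), where `H = ℂ^d` and `H^{⊗n}` is identified with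
functions `(Fin n → Fin d) → ℂ` via the basis of elementary tensors. -/
noncomputable def Ti (d n : ℕ) (T : Matrix (Fin d × Fin d) (Fin d × Fin d) ℂ) (i : ℕ) :
    Matrix (Fin n → Fin d) (Fin n → Fin d) ℂ :=
  if h : 1 ≤ i ∧ i < n then
    fun w w' =>
      T (w ⟨i - 1, by omega⟩, w ⟨i, h.2⟩) (w' ⟨i - 1, by omega⟩, w' ⟨i, h.2⟩) *
        ∏ j : Fin n, if (j : ℕ) = i - 1 ∨ (j : ℕ) = i then 1 else (if w j = w' j then 1 else 0)
  else 1

/-- The product `T_1 T_2 ⋯ T_k` on `H^{⊗n}`. -/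
noncomputable def prodT (d n : ℕ) (T : Matrix (Fin d × Fin d) (Fin d × Fin d) ℂ) (k : ℕ) :
    Matrix (Fin n → Fin d) (Fin n → Fin d) ℂ :=
  ((List.range k).map (fun j => Ti d n T (j + 1))).prod

/-- The reversed product `T_k T_{k-1} ⋯ T_1` on `H^{⊗n}`. -/
noncomputable def prodTrev (d n : ℕ) (T : Matrix (Fin d × Fin d) (Fin d × Fin d) ℂ) (k : ℕ) :
    Matrix (Fin n → Fin d) (Fin n → Fin d) ℂ :=
  ((List.range k).map (fun j => Ti d n T (k - j))).prod

/-- `R_n = 1 + T_1 + T_1 T_2 + ⋯ + T_1 T_2 ⋯ T_{n-1}` on `H^{⊗n}`. -/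
noncomputable def Rmat (d n : ℕ) (T : Matrix (Fin d × Fin d) (Fin d × Fin d) ℂ) :
    Matrix (Fin n → Fin d) (Fin n → Fin d) ℂ :=
  ∑ k ∈ Finset.range n, prodT d n T k

/-- `1 ⊗ A` on `H^{⊗(n+1)}`, for `A` an operator on `H^{⊗n}`. -/
noncomputable def oneTensor (d n : ℕ) (A : Matrix (Fin n → Fin d) (Fin n → Fin d) ℂ) :
    Matrix (Fin (n + 1) → Fin d) (Fin (n + 1) → Fin d) ℂ :=
  fun w w' => (if w 0 = w' 0 then 1 else 0) * A (fun j => w j.succ) (fun j => w' j.succ)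

/-- `A ⊗ 1` on `H^{⊗(n+1)}`, for `A` an operator on `H^{⊗n}`. -/
noncomputable def tensorOne (d n : ℕ) (A : Matrix (Fin n → Fin d) (Fin n → Fin d) ℂ) :
    Matrix (Fin (n + 1) → Fin d) (Fin (n + 1) → Fin d) ℂ :=
  fun w w' =>
    A (fun j => w j.castSucc) (fun j => w' j.castSucc) *
      (if w (Fin.last n) = w' (Fin.last n) then 1 else 0)

/-- The operators `P_n` on `H^{⊗n}`: `P_1 = 1`, `P_{n+1} = (1 ⊗ P_n) R_{n+1}`
(so `P_2 = R_2 = 1 + T`). -/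
noncomputable def Pmat (d : ℕ) (T : Matrix (Fin d × Fin d) (Fin d × Fin d) ℂ) :
    (n : ℕ) → Matrix (Fin n → Fin d) (Fin n → Fin d) ℂ
  | 0 => 1
  | n + 1 => oneTensor d n (Pmat d T n) * Rmat d (n + 1) T

/-- `U_n = (T_1 ⋯ T_n)(T_1 ⋯ T_{n-1}) ⋯ (T_1 T_2) T_1` on `H^{⊗m}`. -/
noncomputable def Umat (d m : ℕ) (T : Matrix (Fin d × Fin d) (Fin d × Fin d) ℂ) (n : ℕ) :
    Matrix (Fin m → Fin d) (Fin m → Fin d) ℂ :=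
  ((List.range n).map (fun j => prodT d m T (n - j))).prod

/-- The braid condition `T_1 T_2 T_1 = T_2 T_1 T_2` on `H^{⊗3}`. -/
def Braided (d : ℕ) (T : Matrix (Fin d × Fin d) (Fin d × Fin d) ℂ) : Prop :=
  Ti d 3 T 1 * Ti d 3 T 2 * Ti d 3 T 1 = Ti d 3 T 2 * Ti d 3 T 1 * Ti d 3 T 2

/-- Elementary tensor `X ⊗ Y ∈ H^{⊗(n+m)}`. -/
noncomputable def tensorVec {d n m : ℕ} (X : (Fin n → Fin d) → ℂ) (Y : (Fin m → Fin d) → ℂ) :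
    (Fin (n + m) → Fin d) → ℂ :=
  fun u => X (fun i => u (Fin.castAdd m i)) * Y (fun j => u (Fin.natAdd n j))


lemma sum_delta_mul {d : ℕ} (a b : Fin d) :
    (∑ x : Fin d, (if a = x then (1:ℂ) else 0) * (if x = b then 1 else 0)) =
      (if a = b then (1:ℂ) else 0) := by
  simp only [ite_mul, one_mul, zero_mul]
  simp [Finset.sum_ite_eq]

lemma Ti_apply_pos (d n : ℕ) (T : Matrix (Fin d × Fin d) (Fin d × Fin d) ℂ) (i : ℕ)
    (h : (1 ≤ i ∧ i < n)) (w w' : Fin n → Fin d) : Ti d n T i w w' =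
      T (w ⟨i - 1, by omega⟩, w ⟨i, h.2⟩) (w' ⟨i - 1, by omega⟩, w' ⟨i, h.2⟩) *
        ∏ j : Fin n, if (j : ℕ) = i - 1 ∨ (j : ℕ) = i then 1 else (if w j = w' j then 1 else 0) := by
  unfold Ti; exact congrArg (fun M : Matrix (Fin n → Fin d) (Fin n → Fin d) ℂ => M w w') (dif_pos h)

lemma Ti_of_not (d n : ℕ) (T : Matrix (Fin d × Fin d) (Fin d × Fin d) ℂ) (i : ℕ)
    (h : ¬ (1 ≤ i ∧ i < n)) : Ti d n T i = 1 := by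
  unfold Ti; exact dif_neg h

lemma oneTensor_one (d n : ℕ) : oneTensor d n 1 = 1 := by
  funext w w'
  simp only [oneTensor, Matrix.one_apply]
  by_cases h : w = w'
  · subst h; simp
  · have : ¬ (w 0 = w' 0 ∧ (fun j : Fin n => w j.succ) = fun j => w' j.succ) := by
      intro ⟨h0, hs⟩
      apply h
      funext j
      cases j using Fin.cases with
      | zero => exact h0
      | succ j => exact congrFun hs j
    rw [if_neg h]
    rcases not_and_or.mp this with h1 | h1
    · simp [if_neg h1]
    · simp [if_neg h1]

lemma oneTensor_add (d n : ℕ) (A B : Matrix (Fin n → Fin d) (Fin n → Fin d) ℂ) :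
    oneTensor d n (A + B) = oneTensor d n A + oneTensor d n B := by
  funext w w'
  simp only [oneTensor, Matrix.add_apply]
  ring

lemma tensorOne_one (d n : ℕ) : tensorOne d n 1 = 1 := by
  funext w w'
  simp only [tensorOne, Matrix.one_apply]
  by_cases h : w = w'
  · subst h; simp
  · have : ¬ ((fun j : Fin n => w j.castSucc) = (fun j => w' j.castSucc) ∧
        w (Fin.last n) = w' (Fin.last n)) := by
      intro ⟨hs, h0⟩
      apply h
      funext j
      cases j using Fin.lastCases with
      | last => exact h0
      | cast j => exact congrFun hs j
    rw [if_neg h]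
    rcases not_and_or.mp this with h1 | h1
    · simp [if_neg h1]
    · simp [if_neg h1]

lemma tensorOne_add (d n : ℕ) (A B : Matrix (Fin n → Fin d) (Fin n → Fin d) ℂ) :
    tensorOne d n (A + B) = tensorOne d n A + tensorOne d n B := by
  funext w w'
  simp only [tensorOne, Matrix.add_apply]
  ring

lemma oneTensor_mul (d n : ℕ) (A B : Matrix (Fin n → Fin d) (Fin n → Fin d) ℂ) :
    oneTensor d n (A * B) = oneTensor d n A * oneTensor d n B := by
  funext w w'
  rw [Matrix.mul_apply]
  rw [← Equiv.sum_comp (Fin.consEquiv (fun _ : Fin (n+1) => Fin d))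
    (fun v => oneTensor d n A w v * oneTensor d n B v w')]
  rw [Fintype.sum_prod_type]
  simp only [oneTensor, Fin.consEquiv_apply, Fin.cons_zero, Fin.cons_succ,
    Matrix.mul_apply]
  rw [Finset.sum_comm]
  rw [Finset.mul_sum]
  refine Finset.sum_congr rfl fun u _ => ?_
  rw [← sum_delta_mul (w 0) (w' 0), Finset.sum_mul]
  exact Finset.sum_congr rfl fun x _ => by ring

lemma tensorOne_mul (d n : ℕ) (A B : Matrix (Fin n → Fin d) (Fin n → Fin d) ℂ) :
    tensorOne d n (A * B) = tensorOne d n A * tensorOne d n B := by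
  funext w w'
  rw [Matrix.mul_apply]
  rw [← Equiv.sum_comp (Fin.snocEquiv (fun _ : Fin (n+1) => Fin d))
    (fun v => tensorOne d n A w v * tensorOne d n B v w')]
  rw [Fintype.sum_prod_type]
  simp only [tensorOne, Fin.snocEquiv_apply, Fin.snoc_last, Fin.snoc_castSucc,
    Matrix.mul_apply]
  rw [Finset.sum_comm]
  rw [Finset.sum_mul]
  refine Finset.sum_congr rfl fun u _ => ?_
  rw [← sum_delta_mul (w (Fin.last n)) (w' (Fin.last n)), Finset.mul_sum]
  exact Finset.sum_congr rfl fun x _ => by ring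
lemma oneTensor_Ti (d n : ℕ) (T : Matrix (Fin d × Fin d) (Fin d × Fin d) ℂ) (i : ℕ)
    (hi : 1 ≤ i) : oneTensor d n (Ti d n T i) = Ti d (n + 1) T (i + 1) := by
  by_cases h : i < n
  · funext w w'
    simp only [oneTensor, Ti_apply_pos d n T i (⟨hi, h⟩ : 1 ≤ i ∧ i < n),
      Ti_apply_pos d (n + 1) T (i + 1) (⟨by omega, by omega⟩ : 1 ≤ i + 1 ∧ i + 1 < n + 1)]
    rw [Fin.prod_univ_succ]
    simp only [Fin.val_zero, Fin.val_succ, Fin.succ_mk, Nat.add_sub_cancel]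
    rw [if_neg (by omega : ¬ ((0:ℕ) = i ∨ (0:ℕ) = i + 1))]
    have e1 : i - 1 + 1 = i := by omega
    simp only [e1]
    have hprod : (∏ j : Fin n, if (j:ℕ) = i - 1 ∨ (j:ℕ) = i then (1:ℂ)
          else if w j.succ = w' j.succ then 1 else 0)
        = ∏ j : Fin n, if (j:ℕ) + 1 = i ∨ (j:ℕ) + 1 = i + 1 then (1:ℂ)
          else if w j.succ = w' j.succ then 1 else 0 :=
      Finset.prod_congr rfl fun j _ => if_congr (by omega) rfl rfl
    rw [hprod]
    ring
  · rw [Ti_of_not d n T i (by omega), Ti_of_not d (n+1) T (i+1) (by omega), oneTensor_one]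

lemma tensorOne_Ti (d n : ℕ) (T : Matrix (Fin d × Fin d) (Fin d × Fin d) ℂ) (i : ℕ)
    (hi : 1 ≤ i) (h : i < n) : tensorOne d n (Ti d n T i) = Ti d (n + 1) T i := by
  funext w w'
  simp only [tensorOne, Ti_apply_pos d n T i (⟨hi, h⟩ : 1 ≤ i ∧ i < n),
    Ti_apply_pos d (n + 1) T i (⟨hi, by omega⟩ : 1 ≤ i ∧ i < n + 1)]
  rw [Fin.prod_univ_castSucc]
  simp only [Fin.coe_castSucc, Fin.val_last, Fin.castSucc_mk]
  rw [if_neg (by omega : ¬ ((n:ℕ) = i - 1 ∨ (n:ℕ) = i))]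
  ring
lemma Ti_mul_Ti_disjoint (d m : ℕ) (T : Matrix (Fin d × Fin d) (Fin d × Fin d) ℂ)
    (i k : ℕ) (hi1 : 1 ≤ i) (hi : i < m) (hk1 : 1 ≤ k) (hk : k < m)
    (hdisj : i + 2 ≤ k ∨ k + 2 ≤ i) (w w' : Fin m → Fin d) :
    (Ti d m T i * Ti d m T k) w w' =
      T (w ⟨i - 1, by omega⟩, w ⟨i, hi⟩) (w' ⟨i - 1, by omega⟩, w' ⟨i, hi⟩) *
        T (w ⟨k - 1, by omega⟩, w ⟨k, hk⟩) (w' ⟨k - 1, by omega⟩, w' ⟨k, hk⟩) *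
        ∏ j : Fin m, if (j:ℕ) = i - 1 ∨ (j:ℕ) = i ∨ (j:ℕ) = k - 1 ∨ (j:ℕ) = k then 1
          else (if w j = w' j then 1 else 0) := by
  rw [Matrix.mul_apply]
  set v0 : Fin m → Fin d := fun j => if (j:ℕ) = i - 1 ∨ (j:ℕ) = i then w' j else w j with hv0
  rw [Finset.sum_eq_single v0]
  · simp only [Ti_apply_pos d m T i (⟨hi1, hi⟩ : 1 ≤ i ∧ i < m), Ti_apply_pos d m T k (⟨hk1, hk⟩ : 1 ≤ k ∧ k < m)]
    have e1 : v0 ⟨i - 1, by omega⟩ = w' ⟨i - 1, by omega⟩ := by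
      simp only [hv0]; simp
    have e2 : v0 ⟨i, hi⟩ = w' ⟨i, hi⟩ := by
      simp only [hv0]; simp
    have e3 : v0 ⟨k - 1, by omega⟩ = w ⟨k - 1, by omega⟩ := by
      simp only [hv0]
      refine if_neg ?_
      show ¬ ((k - 1 : ℕ) = i - 1 ∨ (k - 1 : ℕ) = i)
      omega
    have e4 : v0 ⟨k, hk⟩ = w ⟨k, hk⟩ := by
      simp only [hv0]
      refine if_neg ?_
      show ¬ ((k : ℕ) = i - 1 ∨ (k : ℕ) = i)
      omega
    rw [e1, e2, e3, e4]
    have p1 : (∏ j : Fin m, if (j:ℕ) = i - 1 ∨ (j:ℕ) = i then (1:ℂ)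
        else if w j = v0 j then 1 else 0) = 1 := by
      apply Finset.prod_eq_one
      intro j _
      by_cases hj : (j:ℕ) = i - 1 ∨ (j:ℕ) = i
      · rw [if_pos hj]
      · rw [if_neg hj]
        have : v0 j = w j := by simp only [hv0]; rw [if_neg hj]
        rw [this, if_pos rfl]
    have p2 : (∏ j : Fin m, if (j:ℕ) = k - 1 ∨ (j:ℕ) = k then (1:ℂ)
        else if v0 j = w' j then 1 else 0) =
        ∏ j : Fin m, if (j:ℕ) = i - 1 ∨ (j:ℕ) = i ∨ (j:ℕ) = k - 1 ∨ (j:ℕ) = k then (1:ℂ)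
          else (if w j = w' j then 1 else 0) := by
      apply Finset.prod_congr rfl
      intro j _
      by_cases hjk : (j:ℕ) = k - 1 ∨ (j:ℕ) = k
      · have hb : ((j:ℕ) = i - 1 ∨ (j:ℕ) = i ∨ (j:ℕ) = k - 1 ∨ (j:ℕ) = k) := by tauto
        rw [if_pos hjk, if_pos hb]
      · rw [if_neg hjk]
        by_cases hji : (j:ℕ) = i - 1 ∨ (j:ℕ) = i
        · have hb : ((j:ℕ) = i - 1 ∨ (j:ℕ) = i ∨ (j:ℕ) = k - 1 ∨ (j:ℕ) = k) := by tauto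
          have : v0 j = w' j := by simp only [hv0]; rw [if_pos hji]
          rw [this, if_pos rfl, if_pos hb]
        · have hb : ¬ ((j:ℕ) = i - 1 ∨ (j:ℕ) = i ∨ (j:ℕ) = k - 1 ∨ (j:ℕ) = k) := by tauto
          have : v0 j = w j := by simp only [hv0]; rw [if_neg hji]
          rw [this, if_neg hb]
    rw [p1, p2]
    ring
  · intro v _ hv
    have hex : ∃ j, v j ≠ v0 j := by
      by_contra hc
      push_neg at hc
      exact hv (funext hc)
    obtain ⟨j, hj⟩ := hex
    by_cases hji : (j:ℕ) = i - 1 ∨ (j:ℕ) = i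
    · have hv0j : v0 j = w' j := by simp only [hv0]; rw [if_pos hji]
      have hne : v j ≠ w' j := by rw [← hv0j]; exact hj
      have : Ti d m T k v w' = 0 := by
        simp only [Ti_apply_pos d m T k (⟨hk1, hk⟩ : 1 ≤ k ∧ k < m)]
        have : (∏ l : Fin m, if (l:ℕ) = k - 1 ∨ (l:ℕ) = k then (1:ℂ)
            else if v l = w' l then 1 else 0) = 0 := by
          apply Finset.prod_eq_zero (Finset.mem_univ j)
          rw [if_neg (by omega), if_neg hne]
        rw [this, mul_zero]
      rw [this, mul_zero]
    · have hv0j : v0 j = w j := by simp only [hv0]; rw [if_neg hji]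
      have hne : w j ≠ v j := by rw [← hv0j]; exact (Ne.symm hj)
      have : Ti d m T i w v = 0 := by
        simp only [Ti_apply_pos d m T i (⟨hi1, hi⟩ : 1 ≤ i ∧ i < m)]
        have : (∏ l : Fin m, if (l:ℕ) = i - 1 ∨ (l:ℕ) = i then (1:ℂ)
            else if w l = v l then 1 else 0) = 0 := by
          apply Finset.prod_eq_zero (Finset.mem_univ j)
          rw [if_neg hji, if_neg hne]
        rw [this, mul_zero]
      rw [this, zero_mul]
  · intro h
    exact absurd (Finset.mem_univ v0) h

lemma Ti_comm (d m : ℕ) (T : Matrix (Fin d × Fin d) (Fin d × Fin d) ℂ)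
    (i k : ℕ) (hdisj : i + 2 ≤ k ∨ k + 2 ≤ i) :
    Ti d m T i * Ti d m T k = Ti d m T k * Ti d m T i := by
  by_cases hi : 1 ≤ i ∧ i < m
  · by_cases hk : 1 ≤ k ∧ k < m
    · funext w w'
      rw [Ti_mul_Ti_disjoint d m T i k hi.1 hi.2 hk.1 hk.2 hdisj,
        Ti_mul_Ti_disjoint d m T k i hk.1 hk.2 hi.1 hi.2 (Or.symm hdisj)]
      have : (∏ j : Fin m, if (j:ℕ) = i - 1 ∨ (j:ℕ) = i ∨ (j:ℕ) = k - 1 ∨ (j:ℕ) = k then (1:ℂ)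
            else (if w j = w' j then 1 else 0)) =
          ∏ j : Fin m, if (j:ℕ) = k - 1 ∨ (j:ℕ) = k ∨ (j:ℕ) = i - 1 ∨ (j:ℕ) = i then (1:ℂ)
            else (if w j = w' j then 1 else 0) :=
        Finset.prod_congr rfl fun j _ => if_congr (by tauto) rfl rfl
      rw [this]
      ring
    · rw [Ti_of_not d m T k hk, mul_one, one_mul]
  · rw [Ti_of_not d m T i hi, mul_one, one_mul]
/-- Embedding of an operator on `H^{⊗3}` into `H^{⊗m}` at offset `p`. -/
noncomputable def embed3 (d m p : ℕ) (A : Matrix (Fin 3 → Fin d) (Fin 3 → Fin d) ℂ) :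
    Matrix (Fin m → Fin d) (Fin m → Fin d) ℂ :=
  if h : p + 3 ≤ m then
    fun w w' =>
      A (fun t => w ⟨p + t, by have := t.isLt; omega⟩) (fun t => w' ⟨p + t, by have := t.isLt; omega⟩) *
        ∏ j : Fin m, if p ≤ (j:ℕ) ∧ (j:ℕ) < p + 3 then 1 else (if w j = w' j then 1 else 0)
  else 1

lemma embed3_apply_pos (d m p : ℕ) (A : Matrix (Fin 3 → Fin d) (Fin 3 → Fin d) ℂ) (h : p + 3 ≤ m)
    (w w' : Fin m → Fin d) : embed3 d m p A w w' =
        A (fun t => w ⟨p + t, by have := t.isLt; omega⟩) (fun t => w' ⟨p + t, by have := t.isLt; omega⟩) *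
          ∏ j : Fin m, if p ≤ (j:ℕ) ∧ (j:ℕ) < p + 3 then 1 else (if w j = w' j then 1 else 0) := by
  unfold embed3
  exact congrArg (fun M : Matrix (Fin m → Fin d) (Fin m → Fin d) ℂ => M w w') (dif_pos h)

def windowEquiv (d m p : ℕ) (hp : p + 3 ≤ m) :
    (Fin m → Fin d) ≃
      (Fin 3 → Fin d) × ({ j : Fin m // ¬ (p ≤ (j:ℕ) ∧ (j:ℕ) < p + 3) } → Fin d) where
  toFun v := (fun t => v ⟨p + t, by have := t.isLt; omega⟩, fun j => v j.1)
  invFun x := fun j =>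
    if h : p ≤ (j:ℕ) ∧ (j:ℕ) < p + 3 then x.1 ⟨(j:ℕ) - p, by omega⟩ else x.2 ⟨j, h⟩
  left_inv v := by
    funext j
    dsimp only
    by_cases h : p ≤ (j:ℕ) ∧ (j:ℕ) < p + 3
    · rw [dif_pos h]
      congr 1
      ext
      try simp only [Fin.val_mk]
      omega
    · rw [dif_neg h]
  right_inv x := by
    refine Prod.ext ?_ ?_
    · funext t
      have ht := t.isLt
      dsimp only
      rw [dif_pos (show p ≤ p + (t:ℕ) ∧ p + (t:ℕ) < p + 3 from ⟨by omega, by omega⟩)]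
      refine congrArg _ (Fin.ext ?_)
      try simp only [Fin.val_mk]
      omega
    · funext j
      dsimp only
      rw [dif_neg j.2]

lemma prod_if_window (d m p : ℕ) (w v : Fin m → Fin d) :
    (∏ j : Fin m, if p ≤ (j:ℕ) ∧ (j:ℕ) < p + 3 then (1:ℂ) else (if w j = v j then 1 else 0)) =
      ∏ j : { j : Fin m // ¬ (p ≤ (j:ℕ) ∧ (j:ℕ) < p + 3) },
        (if w j.1 = v j.1 then (1:ℂ) else 0) := by
  rw [← Finset.prod_filter_mul_prod_filter_not Finset.univ
    (fun j : Fin m => p ≤ (j:ℕ) ∧ (j:ℕ) < p + 3)]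
  rw [Finset.prod_congr rfl (fun j hj => if_pos (Finset.mem_filter.mp hj).2),
    Finset.prod_const_one, one_mul]
  rw [Finset.prod_congr rfl (fun j hj => if_neg (Finset.mem_filter.mp hj).2)]
  exact Finset.prod_subtype _ (fun j => by simp) _

lemma embed3_mul (d m p : ℕ) (hp : p + 3 ≤ m) (A B : Matrix (Fin 3 → Fin d) (Fin 3 → Fin d) ℂ) :
    embed3 d m p (A * B) = embed3 d m p A * embed3 d m p B := by
  funext w w'
  rw [eq_comm, Matrix.mul_apply]
  simp only [embed3_apply_pos d m p _ hp]
  rw [← Equiv.sum_comp (windowEquiv d m p hp).symm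
    (fun v => (A (fun t => w ⟨p + t, by have := t.isLt; omega⟩) (fun t => v ⟨p + t, by have := t.isLt; omega⟩) *
        ∏ j : Fin m, if p ≤ (j:ℕ) ∧ (j:ℕ) < p + 3 then 1 else (if w j = v j then 1 else 0)) *
      (B (fun t => v ⟨p + t, by have := t.isLt; omega⟩) (fun t => w' ⟨p + t, by have := t.isLt; omega⟩) *
        ∏ j : Fin m, if p ≤ (j:ℕ) ∧ (j:ℕ) < p + 3 then 1 else (if v j = w' j then 1 else 0)))]
  rw [Fintype.sum_prod_type]
  have key : ∀ (x : Fin 3 → Fin d) (b : { j : Fin m // ¬ (p ≤ (j:ℕ) ∧ (j:ℕ) < p + 3) } → Fin d),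
      (fun t : Fin 3 => ((windowEquiv d m p hp).symm (x, b)) ⟨p + t, by have := t.isLt; omega⟩) = x := by
    intro x b
    funext t
    have ht := t.isLt
    simp only [windowEquiv, Equiv.coe_fn_symm_mk]
    try dsimp only
    rw [dif_pos (show p ≤ p + (t:ℕ) ∧ p + (t:ℕ) < p + 3 from ⟨by omega, by omega⟩)]
    refine congrArg _ (Fin.ext ?_)
    try simp only [Fin.val_mk]
    omega
  have keyb : ∀ (x : Fin 3 → Fin d) (b : { j : Fin m // ¬ (p ≤ (j:ℕ) ∧ (j:ℕ) < p + 3) } → Fin d)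
      (j : { j : Fin m // ¬ (p ≤ (j:ℕ) ∧ (j:ℕ) < p + 3) }),
      ((windowEquiv d m p hp).symm (x, b)) j.1 = b j := by
    intro x b j
    simp only [windowEquiv, Equiv.coe_fn_symm_mk]
    try dsimp only
    rw [dif_neg j.2]
  trans (∑ x : Fin 3 → Fin d,
      (A (fun t => w ⟨p + t, by have := t.isLt; omega⟩) x *
        B x (fun t => w' ⟨p + t, by have := t.isLt; omega⟩)) *
      ∑ b : { j : Fin m // ¬ (p ≤ (j:ℕ) ∧ (j:ℕ) < p + 3) } → Fin d,
        ∏ j : { j : Fin m // ¬ (p ≤ (j:ℕ) ∧ (j:ℕ) < p + 3) },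
          ((if w j.1 = b j then (1:ℂ) else 0) * (if b j = w' j.1 then 1 else 0)))
  · refine Finset.sum_congr rfl fun x _ => ?_
    rw [Finset.mul_sum]
    refine Finset.sum_congr rfl fun b _ => ?_
    rw [key x b, prod_if_window d m p w _, prod_if_window d m p _ w',
      Finset.prod_mul_distrib]
    simp only [keyb x b]
    ring
  · have hb : (∑ b : { j : Fin m // ¬ (p ≤ (j:ℕ) ∧ (j:ℕ) < p + 3) } → Fin d,
        ∏ j : { j : Fin m // ¬ (p ≤ (j:ℕ) ∧ (j:ℕ) < p + 3) },
          ((if w j.1 = b j then (1:ℂ) else 0) * (if b j = w' j.1 then 1 else 0))) =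
        ∏ j : { j : Fin m // ¬ (p ≤ (j:ℕ) ∧ (j:ℕ) < p + 3) },
          (if w j.1 = w' j.1 then (1:ℂ) else 0) := by
      rw [show (Finset.univ : Finset ({ j : Fin m // ¬ (p ≤ (j:ℕ) ∧ (j:ℕ) < p + 3) } → Fin d)) =
          Fintype.piFinset (fun _ => Finset.univ) from (Fintype.piFinset_univ).symm,
        ← Finset.prod_univ_sum (fun _ => (Finset.univ : Finset (Fin d)))
          (fun (j : { j : Fin m // ¬ (p ≤ (j:ℕ) ∧ (j:ℕ) < p + 3) }) (y : Fin d) =>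
            (if w j.1 = y then (1:ℂ) else 0) * (if y = w' j.1 then 1 else 0))]
      exact Finset.prod_congr rfl fun j _ => sum_delta_mul _ _
    simp only [hb]
    rw [Matrix.mul_apply]
    try rw [Finset.sum_mul]
    try rw [prod_if_window]
    try exact Finset.sum_congr rfl fun x _ => by ring
lemma embed3_Ti1 (d m p : ℕ) (hp : p + 3 ≤ m) (T : Matrix (Fin d × Fin d) (Fin d × Fin d) ℂ) :
    embed3 d m p (Ti d 3 T 1) = Ti d m T (p + 1) := by
  funext w w'
  simp only [embed3_apply_pos d m p _ hp,
    Ti_apply_pos d 3 T 1 (⟨by omega, by omega⟩ : 1 ≤ 1 ∧ 1 < 3),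
    Ti_apply_pos d m T (p + 1) (⟨by omega, by omega⟩ : 1 ≤ p + 1 ∧ p + 1 < m)]
  have h3 : (∏ t : Fin 3, if (t:ℕ) = 1 - 1 ∨ (t:ℕ) = 1 then (1:ℂ)
      else (if w ⟨p + t, by have := t.isLt; omega⟩ = w' ⟨p + t, by have := t.isLt; omega⟩
        then 1 else 0)) =
      (if w ⟨p + 2, by omega⟩ = w' ⟨p + 2, by omega⟩ then (1:ℂ) else 0) := by
    rw [Fin.prod_univ_three]
    norm_num
  rw [h3]
  have hsplit : (∏ j : Fin m, if (j:ℕ) = p + 1 - 1 ∨ (j:ℕ) = p + 1 then (1:ℂ)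
      else (if w j = w' j then 1 else 0)) =
      (if w ⟨p + 2, by omega⟩ = w' ⟨p + 2, by omega⟩ then (1:ℂ) else 0) *
      ∏ j ∈ Finset.univ.erase (⟨p + 2, by omega⟩ : Fin m),
        if p ≤ (j:ℕ) ∧ (j:ℕ) < p + 3 then (1:ℂ) else (if w j = w' j then 1 else 0) := by
    rw [← Finset.mul_prod_erase Finset.univ _ (Finset.mem_univ (⟨p + 2, by omega⟩ : Fin m))]
    congr 1
    · rw [if_neg]
      show ¬ ((p + 2 : ℕ) = p + 1 - 1 ∨ (p + 2 : ℕ) = p + 1)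
      omega
    · refine Finset.prod_congr rfl fun j hj => ?_
      have hj2 : (j:ℕ) ≠ p + 2 := by
        intro hc
        exact (Finset.mem_erase.mp hj).1 (Fin.ext hc)
      exact if_congr (by omega) rfl rfl
  have hsplit2 : (∏ j : Fin m, if p ≤ (j:ℕ) ∧ (j:ℕ) < p + 3 then (1:ℂ)
      else (if w j = w' j then 1 else 0)) =
      1 * ∏ j ∈ Finset.univ.erase (⟨p + 2, by omega⟩ : Fin m),
        if p ≤ (j:ℕ) ∧ (j:ℕ) < p + 3 then (1:ℂ) else (if w j = w' j then 1 else 0) := by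
    rw [← Finset.mul_prod_erase Finset.univ _ (Finset.mem_univ (⟨p + 2, by omega⟩ : Fin m))]
    congr 1
    rw [if_pos]
    show p ≤ (p + 2 : ℕ) ∧ (p + 2 : ℕ) < p + 3
    omega
  rw [hsplit, hsplit2]
  simp only [Nat.sub_self, Nat.add_zero, Nat.add_sub_cancel]
  ring
lemma embed3_Ti2 (d m p : ℕ) (hp : p + 3 ≤ m) (T : Matrix (Fin d × Fin d) (Fin d × Fin d) ℂ) :
    embed3 d m p (Ti d 3 T 2) = Ti d m T (p + 2) := by
  funext w w'
  simp only [embed3_apply_pos d m p _ hp,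
    Ti_apply_pos d 3 T 2 (⟨by omega, by omega⟩ : 1 ≤ 2 ∧ 2 < 3),
    Ti_apply_pos d m T (p + 2) (⟨by omega, by omega⟩ : 1 ≤ p + 2 ∧ p + 2 < m)]
  have h3 : (∏ t : Fin 3, if (t:ℕ) = 2 - 1 ∨ (t:ℕ) = 2 then (1:ℂ)
      else (if w ⟨p + t, by have := t.isLt; omega⟩ = w' ⟨p + t, by have := t.isLt; omega⟩
        then 1 else 0)) =
      (if w ⟨p, by omega⟩ = w' ⟨p, by omega⟩ then (1:ℂ) else 0) := by
    rw [Fin.prod_univ_three]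
    norm_num
  rw [h3]
  have hsplit : (∏ j : Fin m, if (j:ℕ) = p + 2 - 1 ∨ (j:ℕ) = p + 2 then (1:ℂ)
      else (if w j = w' j then 1 else 0)) =
      (if w ⟨p, by omega⟩ = w' ⟨p, by omega⟩ then (1:ℂ) else 0) *
      ∏ j ∈ Finset.univ.erase (⟨p, by omega⟩ : Fin m),
        if p ≤ (j:ℕ) ∧ (j:ℕ) < p + 3 then (1:ℂ) else (if w j = w' j then 1 else 0) := by
    rw [← Finset.mul_prod_erase Finset.univ _ (Finset.mem_univ (⟨p, by omega⟩ : Fin m))]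
    congr 1
    · rw [if_neg]
      show ¬ ((p : ℕ) = p + 2 - 1 ∨ (p : ℕ) = p + 2)
      omega
    · refine Finset.prod_congr rfl fun j hj => ?_
      have hj2 : (j:ℕ) ≠ p := by
        intro hc
        exact (Finset.mem_erase.mp hj).1 (Fin.ext hc)
      exact if_congr (by omega) rfl rfl
  have hsplit2 : (∏ j : Fin m, if p ≤ (j:ℕ) ∧ (j:ℕ) < p + 3 then (1:ℂ)
      else (if w j = w' j then 1 else 0)) =
      1 * ∏ j ∈ Finset.univ.erase (⟨p, by omega⟩ : Fin m),
        if p ≤ (j:ℕ) ∧ (j:ℕ) < p + 3 then (1:ℂ) else (if w j = w' j then 1 else 0) := by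
    rw [← Finset.mul_prod_erase Finset.univ _ (Finset.mem_univ (⟨p, by omega⟩ : Fin m))]
    congr 1
    rw [if_pos]
    show p ≤ (p : ℕ) ∧ (p : ℕ) < p + 3
    omega
  rw [hsplit, hsplit2]
  simp only [show p + (2 - 1) = p + 1 from rfl, show p + 2 - 1 = p + 1 from rfl]
  ring
lemma Ti_braid (d m : ℕ) (T : Matrix (Fin d × Fin d) (Fin d × Fin d) ℂ)
    (hbraid : Braided d T) (i : ℕ) (hi1 : 1 ≤ i) (hi : i + 1 < m) :
    Ti d m T i * Ti d m T (i + 1) * Ti d m T i =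
      Ti d m T (i + 1) * Ti d m T i * Ti d m T (i + 1) := by
  have hp : (i - 1) + 3 ≤ m := by omega
  have h1 : Ti d m T i = embed3 d m (i - 1) (Ti d 3 T 1) := by
    rw [embed3_Ti1 d m (i - 1) hp, show i - 1 + 1 = i from by omega]
  have h2 : Ti d m T (i + 1) = embed3 d m (i - 1) (Ti d 3 T 2) := by
    rw [embed3_Ti2 d m (i - 1) hp, show i - 1 + 2 = i + 1 from by omega]
  rw [h1, h2, ← embed3_mul d m (i-1) hp, ← embed3_mul d m (i-1) hp,
    ← embed3_mul d m (i-1) hp, ← embed3_mul d m (i-1) hp, hbraid]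

lemma prodT_zero (d n : ℕ) (T : Matrix (Fin d × Fin d) (Fin d × Fin d) ℂ) :
    prodT d n T 0 = 1 := by
  simp [prodT]

lemma prodT_succ (d n : ℕ) (T : Matrix (Fin d × Fin d) (Fin d × Fin d) ℂ) (k : ℕ) :
    prodT d n T (k + 1) = prodT d n T k * Ti d n T (k + 1) := by
  rw [prodT, prodT, List.range_succ, List.map_append, List.prod_append]
  simp

lemma Ti_comm_prodT (d m : ℕ) (T : Matrix (Fin d × Fin d) (Fin d × Fin d) ℂ)
    (j l : ℕ) (hj : l + 2 ≤ j) :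
    Ti d m T j * prodT d m T l = prodT d m T l * Ti d m T j := by
  induction l with
  | zero => rw [prodT_zero, one_mul, mul_one]
  | succ l ih =>
    rw [prodT_succ, ← mul_assoc, ih (by omega), mul_assoc,
      Ti_comm d m T j (l + 1) (Or.inr (by omega)), ← mul_assoc]

lemma intertwine (d m : ℕ) (T : Matrix (Fin d × Fin d) (Fin d × Fin d) ℂ)
    (hbraid : Braided d T) (k l : ℕ) (hk : 1 ≤ k) (hkl : k + 1 ≤ l) (hl : l < m) :
    Ti d m T (k + 1) * prodT d m T l = prodT d m T l * Ti d m T k := by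
  induction l with
  | zero => exact absurd hkl (by omega)
  | succ l ih =>
    by_cases hcase : k + 1 = l + 1
    · have hlk : l = k := by omega
      subst hlk
      have hsplit : prodT d m T (l + 1) = prodT d m T (l - 1) * Ti d m T l * Ti d m T (l + 1) := by
        conv_lhs => rw [show l + 1 = (l - 1) + 1 + 1 by omega]
        rw [prodT_succ, prodT_succ, show l - 1 + 1 = l by omega]
      rw [hsplit]
      calc Ti d m T (l + 1) * (prodT d m T (l - 1) * Ti d m T l * Ti d m T (l + 1))
          = Ti d m T (l + 1) * prodT d m T (l - 1) * (Ti d m T l * Ti d m T (l + 1)) := by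
            simp only [mul_assoc]
        _ = prodT d m T (l - 1) * Ti d m T (l + 1) * (Ti d m T l * Ti d m T (l + 1)) := by
            rw [Ti_comm_prodT d m T (l + 1) (l - 1) (by omega)]
        _ = prodT d m T (l - 1) * (Ti d m T (l + 1) * Ti d m T l * Ti d m T (l + 1)) := by
            simp only [mul_assoc]
        _ = prodT d m T (l - 1) * (Ti d m T l * Ti d m T (l + 1) * Ti d m T l) := by
            rw [Ti_braid d m T hbraid l hk hl]
        _ = prodT d m T (l - 1) * Ti d m T l * Ti d m T (l + 1) * Ti d m T l := by
            simp only [mul_assoc]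
    · have hkl' : k + 1 ≤ l := by omega
      rw [prodT_succ, ← mul_assoc, ih hkl' (by omega), mul_assoc,
        Ti_comm d m T k (l + 1) (Or.inl (by omega)), ← mul_assoc]
lemma oneTensor_zero (d n : ℕ) : oneTensor d n 0 = 0 := by
  funext w w'
  simp [oneTensor]

lemma tensorOne_zero (d n : ℕ) : tensorOne d n 0 = 0 := by
  funext w w'
  simp [tensorOne]

/-- Matrices generated by `1`, `0`, the `Ti`, sums and products. -/
inductive InT (d n : ℕ) (T : Matrix (Fin d × Fin d) (Fin d × Fin d) ℂ) :
    Matrix (Fin n → Fin d) (Fin n → Fin d) ℂ → Prop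
  | one : InT d n T 1
  | zero : InT d n T 0
  | gen (i : ℕ) : InT d n T (Ti d n T i)
  | add {A B} : InT d n T A → InT d n T B → InT d n T (A + B)
  | mul {A B} : InT d n T A → InT d n T B → InT d n T (A * B)

lemma InT_prodT (d n : ℕ) (T : Matrix (Fin d × Fin d) (Fin d × Fin d) ℂ) (k : ℕ) :
    InT d n T (prodT d n T k) := by
  induction k with
  | zero => rw [prodT_zero]; exact .one
  | succ k ih => rw [prodT_succ]; exact .mul ih (.gen _)

lemma InT_Rmat (d n : ℕ) (T : Matrix (Fin d × Fin d) (Fin d × Fin d) ℂ) :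
    InT d n T (Rmat d n T) := by
  rw [Rmat]
  refine Finset.sum_induction _ _ (fun _ _ => .add) .zero ?_
  intro k _
  exact InT_prodT d n T k

lemma InT_oneTensor (d n : ℕ) (T : Matrix (Fin d × Fin d) (Fin d × Fin d) ℂ)
    {A : Matrix (Fin n → Fin d) (Fin n → Fin d) ℂ} (h : InT d n T A) :
    InT d (n + 1) T (oneTensor d n A) := by
  induction h with
  | one => rw [oneTensor_one]; exact .one
  | zero => rw [oneTensor_zero]; exact .zero
  | gen i =>
    match i with
    | 0 => rw [Ti_of_not d n T 0 (by omega), oneTensor_one]; exact .one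
    | (i + 1) => rw [oneTensor_Ti d n T (i + 1) (by omega)]; exact .gen _
  | add _ _ iha ihb => rw [oneTensor_add]; exact .add iha ihb
  | mul _ _ iha ihb => rw [oneTensor_mul]; exact .mul iha ihb

lemma InT_Pmat (d : ℕ) (T : Matrix (Fin d × Fin d) (Fin d × Fin d) ℂ) (n : ℕ) :
    InT d n T (Pmat d T n) := by
  induction n with
  | zero => exact .one
  | succ n ih => exact .mul (InT_oneTensor d n T ih) (InT_Rmat d (n + 1) T)

lemma good (d n : ℕ) (T : Matrix (Fin d × Fin d) (Fin d × Fin d) ℂ) (hbraid : Braided d T)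
    {A : Matrix (Fin n → Fin d) (Fin n → Fin d) ℂ} (h : InT d n T A) :
    oneTensor d n A * prodT d (n + 1) T n = prodT d (n + 1) T n * tensorOne d n A := by
  induction h with
  | one => rw [oneTensor_one, tensorOne_one, one_mul, mul_one]
  | zero => rw [oneTensor_zero, tensorOne_zero, zero_mul, mul_zero]
  | gen i =>
    by_cases h1 : 1 ≤ i
    · by_cases h2 : i < n
      · rw [oneTensor_Ti d n T i h1, tensorOne_Ti d n T i h1 h2]
        exact intertwine d (n + 1) T hbraid i n h1 (by omega) (by omega)
      · rw [Ti_of_not d n T i (by omega), oneTensor_one, tensorOne_one, one_mul, mul_one]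
    · rw [Ti_of_not d n T i (by omega), oneTensor_one, tensorOne_one, one_mul, mul_one]
  | add _ _ iha ihb =>
    rw [oneTensor_add, tensorOne_add, add_mul, mul_add, iha, ihb]
  | mul _ _ iha ihb =>
    rw [oneTensor_mul, tensorOne_mul, mul_assoc, ihb, ← mul_assoc, iha, mul_assoc]

/-- Let `T` be a braided operator on `H ⊗ H` with the operators `P_n` defined as usual.
Then `(1 ⊗ P_n)(T_1 T_2 ⋯ T_n) = (T_1 T_2 ⋯ T_n)(P_n ⊗ 1)` on `H^{⊗(n+1)}`. -/
theorem oneTensorP_mul_prodT (d n : ℕ) (T : Matrix (Fin d × Fin d) (Fin d × Fin d) ℂ)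
    (hbraid : Braided d T) :
    oneTensor d n (Pmat d T n) * prodT d (n + 1) T n =
      prodT d (n + 1) T n * tensorOne d n (Pmat d T n) := by
  exact good d n T hbraid (InT_Pmat d T n)

end Wick
end

section
/- Let T_1,...,T_n be self-adjoint contractions on a Hilbert space K satisfying the braid relations, and U_n = (T_1⋯T_n)(T_1⋯T_{n-1})⋯T_1. If v ∈ ker(1 − U_n²), then T_i² v = v for all i = 1,...,n. -/
namespace Wick

open scoped InnerProductSpace

variable {K : Type*} [NormedAddCommGroup K] [InnerProductSpace ℂ K] [CompleteSpace K]

/-- `T_1 T_2 ⋯ T_k`. -/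
noncomputable def prodOp (T : ℕ → (K →L[ℂ] K)) (k : ℕ) : K →L[ℂ] K :=
  ((List.range k).map (fun j => T (j + 1))).prod

/-- `U_n = (T_1 ⋯ T_n)(T_1 ⋯ T_{n-1}) ⋯ (T_1 T_2) T_1`. -/
noncomputable def Uop (T : ℕ → (K →L[ℂ] K)) (n : ℕ) : K →L[ℂ] K :=
  ((List.range n).map (fun j => prodOp T (n - j))).prod

/-- `T_k T_{k-1} ⋯ T_1`, the reversed product. -/
noncomputable def rProdOp (T : ℕ → (K →L[ℂ] K)) (k : ℕ) : K →L[ℂ] K :=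
  ((List.range k).map (fun j => T (k - j))).prod

lemma prodOp_zero (T : ℕ → (K →L[ℂ] K)) : prodOp T 0 = 1 := by simp [prodOp]

lemma prodOp_succ (T : ℕ → (K →L[ℂ] K)) (k : ℕ) :
    prodOp T (k + 1) = prodOp T k * T (k + 1) := by
  simp [prodOp, List.range_succ]

lemma prodOp_cons (T : ℕ → (K →L[ℂ] K)) (k : ℕ) :
    prodOp T (k + 1) = T 1 * ((List.range k).map (fun j => T (j + 2))).prod := by
  simp [prodOp, List.range_succ_eq_map, List.map_map, Function.comp_def]

lemma rProdOp_zero (T : ℕ → (K →L[ℂ] K)) : rProdOp T 0 = 1 := by simp [rProdOp]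

lemma rProdOp_succ (T : ℕ → (K →L[ℂ] K)) (k : ℕ) :
    rProdOp T (k + 1) = T (k + 1) * rProdOp T k := by
  simp [rProdOp, List.range_succ_eq_map, List.map_map, Function.comp_def, Nat.succ_sub_succ]

lemma Uop_zero (T : ℕ → (K →L[ℂ] K)) : Uop T 0 = 1 := by simp [Uop]

lemma Uop_succ (T : ℕ → (K →L[ℂ] K)) (k : ℕ) :
    Uop T (k + 1) = prodOp T (k + 1) * Uop T k := by
  simp [Uop, List.range_succ_eq_map, List.map_map, Function.comp_def, Nat.succ_sub_succ]

lemma norm_list_prod_le_one (l : List (K →L[ℂ] K)) (h : ∀ x ∈ l, ‖x‖ ≤ 1) :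
    ‖l.prod‖ ≤ 1 := by
  induction l with
  | nil =>
    simpa [List.prod_nil, ContinuousLinearMap.one_def] using ContinuousLinearMap.norm_id_le
  | cons a l ih =>
    rw [List.prod_cons]
    have ha := h a (List.mem_cons_self (a := a) (l := l))
    have hl := ih (fun x hx => h x (List.mem_cons_of_mem a hx))
    calc ‖a * l.prod‖ ≤ ‖a‖ * ‖l.prod‖ := norm_mul_le _ _
      _ ≤ 1 := by nlinarith [norm_nonneg a, norm_nonneg l.prod]

section Lemmas

variable (n : ℕ) (T : ℕ → (K →L[ℂ] K))

lemma norm_prodOp_le (hcontr : ∀ i, 1 ≤ i → i ≤ n → ‖T i‖ ≤ 1)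
    (k : ℕ) (hk : k ≤ n) : ‖prodOp T k‖ ≤ 1 := by
  apply norm_list_prod_le_one
  intro x hx
  simp only [List.mem_map, List.mem_range] at hx
  obtain ⟨j, hj, rfl⟩ := hx
  exact hcontr (j + 1) (by omega) (by omega)

lemma norm_Uop_le (hcontr : ∀ i, 1 ≤ i → i ≤ n → ‖T i‖ ≤ 1)
    (k : ℕ) (hk : k ≤ n) : ‖Uop T k‖ ≤ 1 := by
  apply norm_list_prod_le_one
  intro x hx
  simp only [List.mem_map, List.mem_range] at hx
  obtain ⟨j, hj, rfl⟩ := hx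
  exact norm_prodOp_le n T hcontr _ (by omega)

lemma star_prodOp (hsa : ∀ i, 1 ≤ i → i ≤ n → IsSelfAdjoint (T i))
    (k : ℕ) (hk : k ≤ n) : star (prodOp T k) = rProdOp T k := by
  induction k with
  | zero => simp [prodOp_zero, rProdOp_zero]
  | succ k ih =>
    rw [prodOp_succ, star_mul, ih (by omega), rProdOp_succ,
      (hsa (k + 1) (by omega) hk).star_eq]

/-- `T_m` commutes with `prodOp T k` when `k + 1 < m ≤ n`. -/
lemma prodOp_comm (hcomm : ∀ i j, 1 ≤ i → j ≤ n → i + 2 ≤ j → T i * T j = T j * T i)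
    (k m : ℕ) (hk : k + 1 < m) (hm : m ≤ n) :
    prodOp T k * T m = T m * prodOp T k := by
  induction k with
  | zero => simp [prodOp_zero]
  | succ k ih =>
    rw [prodOp_succ, mul_assoc, hcomm (k + 1) m (by omega) hm (by omega),
      ← mul_assoc, ih (by omega), mul_assoc]

/-- `T_m` commutes with `Uop T k` when `k + 1 < m ≤ n`. -/
lemma Uop_comm (hcomm : ∀ i j, 1 ≤ i → j ≤ n → i + 2 ≤ j → T i * T j = T j * T i)
    (k m : ℕ) (hk : k + 1 < m) (hm : m ≤ n) :
    Uop T k * T m = T m * Uop T k := by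
  induction k with
  | zero => simp [Uop_zero]
  | succ k ih =>
    rw [Uop_succ, mul_assoc, ih (by omega), ← mul_assoc,
      prodOp_comm n T hcomm (k + 1) m hk hm, mul_assoc]

/-- The shift relation `P_m T_i = T_{i+1} P_m` for `1 ≤ i < m ≤ n`. -/
lemma prodOp_shift (hbraid : ∀ i, 1 ≤ i → i + 1 ≤ n →
      T i * T (i + 1) * T i = T (i + 1) * T i * T (i + 1))
    (hcomm : ∀ i j, 1 ≤ i → j ≤ n → i + 2 ≤ j → T i * T j = T j * T i) :
    ∀ m, m ≤ n → ∀ i, 1 ≤ i → i + 1 ≤ m → prodOp T m * T i = T (i + 1) * prodOp T m := by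
  intro m
  induction m with
  | zero => intro _ i _ h2; omega
  | succ m ih =>
    intro hm i h1 h2
    rcases Nat.lt_or_ge (i + 1) (m + 1) with hlt | hge
    · -- i + 1 ≤ m : use induction hypothesis
      have hc : T (m + 1) * T i = T i * T (m + 1) :=
        (hcomm i (m + 1) h1 hm (by omega)).symm
      calc prodOp T (m + 1) * T i
          = prodOp T m * (T (m + 1) * T i) := by rw [prodOp_succ, mul_assoc]
        _ = prodOp T m * (T i * T (m + 1)) := by rw [hc]
        _ = (prodOp T m * T i) * T (m + 1) := by rw [mul_assoc]
        _ = (T (i + 1) * prodOp T m) * T (m + 1) := by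
            rw [ih (by omega) i h1 (by omega)]
        _ = T (i + 1) * prodOp T (m + 1) := by rw [prodOp_succ, mul_assoc]
    · -- i = m : base braid computation
      have him : i = m := by omega
      subst him
      obtain ⟨j, rfl⟩ : ∃ j, i = j + 1 := ⟨i - 1, by omega⟩
      have hbr : T (j + 1) * T (j + 2) * T (j + 1) = T (j + 2) * T (j + 1) * T (j + 2) :=
        hbraid (j + 1) (by omega) (by omega)
      have hcm : prodOp T j * T (j + 2) = T (j + 2) * prodOp T j :=
        prodOp_comm n T hcomm j (j + 2) (by omega) (by omega)
      have expand : prodOp T (j + 1 + 1) = prodOp T j * (T (j + 1) * T (j + 2)) := by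
        rw [prodOp_succ, prodOp_succ, mul_assoc]
      rw [expand]
      calc prodOp T j * (T (j + 1) * T (j + 2)) * T (j + 1)
          = prodOp T j * (T (j + 1) * T (j + 2) * T (j + 1)) := by
            simp only [mul_assoc]
        _ = prodOp T j * (T (j + 2) * T (j + 1) * T (j + 2)) := by rw [hbr]
        _ = prodOp T j * T (j + 2) * (T (j + 1) * T (j + 2)) := by
            simp only [mul_assoc]
        _ = T (j + 2) * prodOp T j * (T (j + 1) * T (j + 2)) := by rw [hcm]
        _ = T (j + 2) * (prodOp T j * (T (j + 1) * T (j + 2))) := by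
            simp only [mul_assoc]

/-- The key commutation `P_{k+1} U_k = U_k P_{k+1}^rev` (only uses `hcomm`). -/
lemma prodOp_mul_Uop (hcomm : ∀ i j, 1 ≤ i → j ≤ n → i + 2 ≤ j → T i * T j = T j * T i) :
    ∀ k, k + 1 ≤ n → prodOp T (k + 1) * Uop T k = Uop T k * rProdOp T (k + 1) := by
  intro k
  induction k with
  | zero =>
    intro _
    simp [Uop_zero, prodOp_succ, prodOp_zero, rProdOp_succ, rProdOp_zero]
  | succ k ih =>
    intro hk
    have hU : Uop T k * T (k + 2) = T (k + 2) * Uop T k :=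
      Uop_comm n T hcomm k (k + 2) (by omega) (by omega)
    calc prodOp T (k + 2) * Uop T (k + 1)
        = (prodOp T (k + 1) * T (k + 2)) * (prodOp T (k + 1) * Uop T k) := by
          rw [prodOp_succ T (k + 1), Uop_succ T k]
      _ = (prodOp T (k + 1) * T (k + 2)) * (Uop T k * rProdOp T (k + 1)) := by
          rw [ih (by omega)]
      _ = prodOp T (k + 1) * (T (k + 2) * Uop T k) * rProdOp T (k + 1) := by
          simp only [mul_assoc]
      _ = prodOp T (k + 1) * (Uop T k * T (k + 2)) * rProdOp T (k + 1) := by rw [hU]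
      _ = (prodOp T (k + 1) * Uop T k) * (T (k + 2) * rProdOp T (k + 1)) := by
          simp only [mul_assoc]
      _ = Uop T (k + 1) * rProdOp T (k + 2) := by
          rw [Uop_succ T k, rProdOp_succ T (k + 1)]

/-- `U_k` is self-adjoint. -/
lemma star_Uop (hsa : ∀ i, 1 ≤ i → i ≤ n → IsSelfAdjoint (T i))
    (hcomm : ∀ i j, 1 ≤ i → j ≤ n → i + 2 ≤ j → T i * T j = T j * T i)
    (k : ℕ) (hk : k ≤ n) : star (Uop T k) = Uop T k := by
  induction k with
  | zero => simp [Uop_zero]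
  | succ k ih =>
    rw [Uop_succ, star_mul, ih (by omega), star_prodOp n T hsa (k + 1) hk,
      ← prodOp_mul_Uop n T hcomm k hk]

/-- `U_m` is left-divisible by each `T_i`, `1 ≤ i ≤ m`, with a contractive cofactor. -/
lemma Uop_div (hcontr : ∀ i, 1 ≤ i → i ≤ n → ‖T i‖ ≤ 1)
    (hbraid : ∀ i, 1 ≤ i → i + 1 ≤ n →
      T i * T (i + 1) * T i = T (i + 1) * T i * T (i + 1))
    (hcomm : ∀ i j, 1 ≤ i → j ≤ n → i + 2 ≤ j → T i * T j = T j * T i) :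
    ∀ m, m ≤ n → ∀ i, 1 ≤ i → i ≤ m →
      ∃ W : K →L[ℂ] K, ‖W‖ ≤ 1 ∧ Uop T m = T i * W := by
  intro m
  induction m with
  | zero => intro _ i _ h2; omega
  | succ m ih =>
    intro hm i h1 h2
    rcases Nat.lt_or_ge i 2 with hi | hi
    · -- i = 1
      have hieq : i = 1 := by omega
      subst hieq
      refine ⟨((List.range m).map (fun j => T (j + 2))).prod * Uop T m, ?_, ?_⟩
      · have hQ : ‖((List.range m).map (fun j => T (j + 2))).prod‖ ≤ 1 := by
          apply norm_list_prod_le_one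
          intro x hx
          simp only [List.mem_map, List.mem_range] at hx
          obtain ⟨j, hj, rfl⟩ := hx
          exact hcontr (j + 2) (by omega) (by omega)
        have hU : ‖Uop T m‖ ≤ 1 := norm_Uop_le n T hcontr m (by omega)
        exact le_trans (norm_mul_le _ _)
          (by nlinarith [norm_nonneg (((List.range m).map (fun j => T (j + 2))).prod),
            norm_nonneg (Uop T m)])
      · rw [Uop_succ, prodOp_cons, mul_assoc]
    · -- i ≥ 2
      obtain ⟨j, rfl⟩ : ∃ j, i = j + 1 := ⟨i - 1, by omega⟩
      obtain ⟨W', hW', hUW'⟩ := ih (by omega) j (by omega) (by omega)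
      refine ⟨prodOp T (m + 1) * W', ?_, ?_⟩
      · have hP : ‖prodOp T (m + 1)‖ ≤ 1 := norm_prodOp_le n T hcontr (m + 1) hm
        exact le_trans (norm_mul_le _ _)
          (by nlinarith [norm_nonneg (prodOp T (m + 1)), norm_nonneg W'])
      · rw [Uop_succ, hUW', ← mul_assoc,
          prodOp_shift n T hbraid hcomm (m + 1) hm j (by omega) (by omega), mul_assoc]

end Lemmas

/-- A self-adjoint contraction which does not decrease the norm of `v` satisfies `T² v = v`. -/
lemma sq_apply_eq_self (S : K →L[ℂ] K) (hsa : IsSelfAdjoint S) (hc : ‖S‖ ≤ 1)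
    (v : K) (hn : ‖v‖ ≤ ‖S v‖) : S (S v) = v := by
  have hle : ∀ x : K, ‖S x‖ ≤ ‖x‖ := fun x =>
    le_trans (S.le_opNorm x) (by nlinarith [norm_nonneg x])
  have h1 : ‖S v‖ = ‖v‖ := le_antisymm (hle v) hn
  have h2 : ‖S (S v)‖ ≤ ‖v‖ := le_trans (hle (S v)) (le_of_eq h1)
  have hadj : ContinuousLinearMap.adjoint S = S := ContinuousLinearMap.isSelfAdjoint_iff'.mp hsa
  have h3 : RCLike.re (⟪S (S v), v⟫_ℂ) = ‖v‖ ^ 2 := by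
    have : ⟪S (S v), v⟫_ℂ = ⟪S v, S v⟫_ℂ := by
      have h := ContinuousLinearMap.adjoint_inner_left S v (S v)
      rw [hadj] at h
      exact h
    rw [this, inner_self_eq_norm_sq, h1]
  have h4 : ‖S (S v) - v‖ ^ 2 = ‖S (S v)‖ ^ 2 - 2 * RCLike.re (⟪S (S v), v⟫_ℂ) + ‖v‖ ^ 2 :=
    norm_sub_sq _ _
  have h5 : ‖S (S v) - v‖ = 0 := by
    nlinarith [norm_nonneg (S (S v) - v), norm_nonneg (S (S v)), norm_nonneg v]
  exact sub_eq_zero.mp (norm_eq_zero.mp h5)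

/-- Let `T_1, ..., T_n` be self-adjoint contractions on a Hilbert space `K` satisfying
the braid relations, and `U_n = (T_1⋯T_n)(T_1⋯T_{n-1})⋯T_1`.  If `v ∈ ker(1 − U_n²)`,
then `T_i² v = v` for all `i = 1, ..., n`. -/
theorem ker_one_sub_Usq (n : ℕ) (T : ℕ → (K →L[ℂ] K))
    (hsa : ∀ i, 1 ≤ i → i ≤ n → IsSelfAdjoint (T i))
    (hcontr : ∀ i, 1 ≤ i → i ≤ n → ‖T i‖ ≤ 1)
    (hbraid : ∀ i, 1 ≤ i → i + 1 ≤ n → T i * T (i + 1) * T i = T (i + 1) * T i * T (i + 1))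
    (hcomm : ∀ i j, 1 ≤ i → j ≤ n → i + 2 ≤ j → T i * T j = T j * T i)
    (v : K) (hv : ((1 - (Uop T n) ^ 2 : K →L[ℂ] K)) v = 0) (i : ℕ) (hi1 : 1 ≤ i) (hi2 : i ≤ n) :
    T i (T i v) = v := by
  -- U² v = v
  have hUv : Uop T n (Uop T n v) = v := by
    have h := hv
    rw [ContinuousLinearMap.sub_apply, ContinuousLinearMap.one_apply, sub_eq_zero] at h
    rw [pow_two, ContinuousLinearMap.mul_apply] at h
    exact h.symm
  -- divisibility: U = T_i * W
  obtain ⟨W, hWn, hUW⟩ := Uop_div n T hcontr hbraid hcomm n le_rfl i hi1 hi2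
  -- self-adjointness: U = star W * T i
  have hUsa : star (Uop T n) = Uop T n := star_Uop n T hsa hcomm n le_rfl
  have hU2 : Uop T n = star W * T i := by
    calc Uop T n = star (Uop T n) := hUsa.symm
      _ = star (T i * W) := by rw [hUW]
      _ = star W * T i := by rw [star_mul, (hsa i hi1 hi2).star_eq]
  -- v = T_i (W (star W (T_i v)))
  have hop : Uop T n * Uop T n = (T i * W) * (star W * T i) := by
    nth_rewrite 2 [hU2]
    nth_rewrite 1 [hUW]
    rfl
  have hkey : v = T i (W (star W (T i v))) := by
    have h := congrArg (fun (A : K →L[ℂ] K) => A v) hop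
    simp only [ContinuousLinearMap.mul_apply] at h
    rw [← h, hUv]
  -- norm estimate
  have hle : ∀ (A : K →L[ℂ] K), ‖A‖ ≤ 1 → ∀ x : K, ‖A x‖ ≤ ‖x‖ := fun A hA x =>
    le_trans (A.le_opNorm x) (by nlinarith [norm_nonneg x])
  have hWs : ‖star W‖ ≤ 1 := by rw [norm_star]; exact hWn
  have hnorm : ‖v‖ ≤ ‖T i v‖ := by
    calc ‖v‖ = ‖T i (W (star W (T i v)))‖ := by rw [← hkey]
      _ ≤ ‖W (star W (T i v))‖ := hle (T i) (hcontr i hi1 hi2) _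
      _ ≤ ‖star W (T i v)‖ := hle W hWn _
      _ ≤ ‖T i v‖ := hle (star W) hWs _
  exact sq_apply_eq_self (T i) (hsa i hi1 hi2) (hcontr i hi1 hi2) v hnorm

end Wick
end
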